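/- Let G be a group with lower central series Γ_kG, and define [a,b] := a * b⁻¹ * a⁻¹ * b. For all integers a, b, c ≥ 1 and all A ∈ Γ_a G, B ∈ Γ_b G, C ∈ Γ_c G, the element [A, [B, C]] * ([[A, B], C] * [[A, C], B⁻¹])⁻¹ lies in Γ_{a+b+c+1} G; that is, [A,[B,C]] ≡ [[A,B],C] * [[A,C],B⁻¹] modulo Γ_{a+b+c+1} G. -/

import Mathlib

/-- The bracket convention of the paper: `[a,b] = a b⁻¹ a⁻¹ b`. -/
def br {G : Type*} [Group G] (a b : G) : G := a * b⁻¹ * a⁻¹ * b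

open scoped commutatorElement

section Aux

variable {G : Type*} [Group G]

lemma lcs_succ (n : ℕ) :
    (⊤ : Subgroup G).lowerCentralSeries (n + 1) = ⁅(⊤ : Subgroup G).lowerCentralSeries n, (⊤ : Subgroup G)⁆ := rfl

/-- Three subgroups lemma, relative version. -/
lemma three_subgroups_le {H₁ H₂ H₃ M : Subgroup G} [M.Normal]
    (h1 : ⁅⁅H₂, H₃⁆, H₁⁆ ≤ M) (h2 : ⁅⁅H₃, H₁⁆, H₂⁆ ≤ M) : ⁅⁅H₁, H₂⁆, H₃⁆ ≤ M := by
  let π := QuotientGroup.mk' M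
  have key : ∀ K : Subgroup G, K ≤ M ↔ Subgroup.map π K = ⊥ := by
    intro K
    rw [Subgroup.map_eq_bot_iff, QuotientGroup.ker_mk']
  rw [key] at h1 h2 ⊢
  rw [Subgroup.map_commutator, Subgroup.map_commutator] at h1 h2 ⊢
  exact Subgroup.commutator_commutator_eq_bot_of_rotate h1 h2

/-- `⁅Γ i, Γ j⁆ ≤ Γ (i+j+1)` for the lower central series. -/
lemma lcs_comm_le : ∀ (j i : ℕ),
    ⁅(⊤ : Subgroup G).lowerCentralSeries i, (⊤ : Subgroup G).lowerCentralSeries j⁆ ≤ (⊤ : Subgroup G).lowerCentralSeries (i + j + 1) := by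
  intro j
  induction j with
  | zero =>
      intro i
      rw [Subgroup.lowerCentralSeries_zero]
      exact le_of_eq (lcs_succ i).symm
  | succ j ih =>
      intro i
      rw [lcs_succ j]
      rw [Subgroup.commutator_comm]
      apply three_subgroups_le
      · rw [Subgroup.commutator_comm (⊤ : Subgroup G)]
        rw [← lcs_succ i]
        calc ⁅(⊤ : Subgroup G).lowerCentralSeries (i + 1), (⊤ : Subgroup G).lowerCentralSeries j⁆
            ≤ (⊤ : Subgroup G).lowerCentralSeries (i + 1 + j + 1) := ih (i + 1)
          _ ≤ (⊤ : Subgroup G).lowerCentralSeries (i + (j + 1) + 1) := le_of_eq (by ring_nf)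
      · calc ⁅⁅(⊤ : Subgroup G).lowerCentralSeries i, (⊤ : Subgroup G).lowerCentralSeries j⁆, (⊤ : Subgroup G)⁆
            ≤ ⁅(⊤ : Subgroup G).lowerCentralSeries (i + j + 1), (⊤ : Subgroup G)⁆ :=
              Subgroup.commutator_mono (ih i) le_rfl
          _ = (⊤ : Subgroup G).lowerCentralSeries (i + j + 2) := (lcs_succ (i + j + 1)).symm
          _ ≤ (⊤ : Subgroup G).lowerCentralSeries (i + (j + 1) + 1) := le_of_eq (by ring_nf)

lemma mem_lcs_zero (g : G) : g ∈ (⊤ : Subgroup G).lowerCentralSeries 0 := by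
  rw [Subgroup.lowerCentralSeries_zero]; trivial

lemma mem_lcs_comm {g h : G} {i j : ℕ} (hg : g ∈ (⊤ : Subgroup G).lowerCentralSeries i)
    (hh : h ∈ (⊤ : Subgroup G).lowerCentralSeries j) : ⁅g, h⁆ ∈ (⊤ : Subgroup G).lowerCentralSeries (i + j + 1) :=
  lcs_comm_le j i (Subgroup.commutator_mem_commutator hg hh)

variable (n : ℕ)

local notation "Q" => G ⧸ Subgroup.lowerCentralSeries (⊤ : Subgroup G) n

lemma mk_commute {g h : G} {i j : ℕ} (hg : g ∈ (⊤ : Subgroup G).lowerCentralSeries i)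
    (hh : h ∈ (⊤ : Subgroup G).lowerCentralSeries j) (hn : n ≤ i + j + 1) :
    Commute (↑g : Q) (↑h : Q) := by
  rw [← commutatorElement_eq_one_iff_commute]
  have : ⁅g, h⁆ ∈ (⊤ : Subgroup G).lowerCentralSeries n :=
    Subgroup.lowerCentralSeries_antitone ⊤ hn (mem_lcs_comm hg hh)
  have : ((⁅g, h⁆ : G) : Q) = 1 := (QuotientGroup.eq_one_iff _).mpr this
  simpa [commutatorElement_def] using this

lemma mk_mem_center {g : G} {m : ℕ} (hg : g ∈ (⊤ : Subgroup G).lowerCentralSeries m) (hn : n ≤ m + 1) :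
    (↑g : Q) ∈ Subgroup.center Q := by
  rw [Subgroup.mem_center_iff]
  intro q
  induction q using QuotientGroup.induction_on with
  | H h =>
      have : Commute (↑h : Q) (↑g : Q) :=
        mk_commute n (mem_lcs_zero h) hg (by omega)
      exact this

end Aux

section Key

variable {Q : Type*} [Group Q]

lemma central_conj {t : Q} (ht : t ∈ Subgroup.center Q) (g : Q) : g * t * g⁻¹ = t := by
  rw [Subgroup.mem_center_iff] at ht
  rw [ht g, mul_assoc, mul_inv_cancel, mul_one]

/-- The key computation, in a group where the relevant triple commutators are central. -/
lemma key_identity (x y z : Q)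
    (hc1 : ⁅⁅x, y⁻¹⁆, z⁆ ∈ Subgroup.center Q)
    (hc2 : ⁅⁅y, z⁻¹⁆, x⁆ ∈ Subgroup.center Q)
    (hc3 : ⁅⁅z, x⁻¹⁆, y⁆ ∈ Subgroup.center Q)
    (hcom : Commute ⁅z, x⁻¹⁆ ⁅x⁻¹ * z, y⁆) :
    br x (br y z) = br (br x y) z * br (br x z) y⁻¹ := by
  set c1 := ⁅⁅x, y⁻¹⁆, z⁆ with hc1def
  set c2 := ⁅⁅y, z⁻¹⁆, x⁆ with hc2def
  set c3 := ⁅⁅z, x⁻¹⁆, y⁆ with hc3def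
  -- Hall–Witt identity (exact, free-group identity)
  have hw : (x⁻¹ * z⁻¹) * c1 * (x⁻¹ * z⁻¹)⁻¹ * ((y⁻¹ * x⁻¹) * c2 * (y⁻¹ * x⁻¹)⁻¹) *
      ((z⁻¹ * y⁻¹) * c3 * (z⁻¹ * y⁻¹)⁻¹) = 1 := by
    simp only [hc1def, hc2def, hc3def, commutatorElement_def]
    group
  rw [central_conj hc1, central_conj hc2, central_conj hc3] at hw
  -- Step B : br x (br y z) = c2
  have stepB : br x (br y z) = c2 := by
    have e1 : br x (br y z) = ⁅y, z⁻¹⁆⁻¹ * c2 * ⁅y, z⁻¹⁆ := by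
      simp only [br, hc2def, commutatorElement_def]
      group
    rw [e1]
    have := central_conj hc2 (⁅y, z⁻¹⁆⁻¹)
    simpa using this
  -- Step C : br (br x y) z = c1⁻¹
  have stepC : br (br x y) z = c1⁻¹ := by
    have e2 : br (br x y) z = z⁻¹ * c1⁻¹ * z := by
      simp only [br, hc1def, commutatorElement_def]
      group
    rw [e2]
    have := central_conj (Subgroup.inv_mem _ hc1) (z⁻¹)
    simpa using this
  -- Step D : br (br x z) y⁻¹ = c3⁻¹
  have stepD : br (br x z) y⁻¹ = c3⁻¹ := by
    set u := x⁻¹ * z with hu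
    set m := ⁅u, y⁆ with hm
    set r := ⁅z, x⁻¹⁆ with hr
    have e4 : br (br x z) y⁻¹ =
        u⁻¹ * (⁅r⁻¹, m⁆ * (m * ⁅r⁻¹, y⁆ * m⁻¹)) * u := by
      simp only [br, hu, hm, hr, commutatorElement_def]
      group
    have h1 : ⁅r⁻¹, m⁆ = 1 := commutatorElement_eq_one_iff_commute.mpr hcom.inv_left
    have h2 : ⁅r⁻¹, y⁆ = r⁻¹ * c3⁻¹ * r := by
      simp only [hc3def, hr, commutatorElement_def]
      group
    have h3 : r⁻¹ * c3⁻¹ * r = c3⁻¹ := by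
      have := central_conj (Subgroup.inv_mem _ hc3) (r⁻¹)
      simpa using this
    rw [e4, h1, h2, h3, one_mul]
    rw [central_conj (Subgroup.inv_mem _ hc3) m]
    have := central_conj (Subgroup.inv_mem _ hc3) (u⁻¹)
    simpa using this
  rw [stepB, stepC, stepD]
  -- From hw : c1 * c2 * c3 = 1, conclude c2 = c1⁻¹ * c3⁻¹
  have : c2 = c1⁻¹ * (c1 * c2 * c3) * c3⁻¹ := by group
  rw [hw] at this
  simpa using this

end Key

/-- IHX relation (algebraic form): for `A ∈ Γ_a G`, `B ∈ Γ_b G`, `C ∈ Γ_c G` (`a,b,c ≥ 1`),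
`[A,[B,C]] ≡ [[A,B],C] * [[A,C],B⁻¹]` modulo `Γ_{a+b+c+1} G`,
where `Γ_k G = (⊤ : Subgroup G).lowerCentralSeries (k-1)`. -/
theorem ihx_relation {G : Type*} [Group G] (a b c : ℕ) (ha : 1 ≤ a) (hb : 1 ≤ b) (hc : 1 ≤ c)
    (A B C : G) (hA : A ∈ (⊤ : Subgroup G).lowerCentralSeries (a - 1))
    (hB : B ∈ (⊤ : Subgroup G).lowerCentralSeries (b - 1)) (hC : C ∈ (⊤ : Subgroup G).lowerCentralSeries (c - 1)) :
    br A (br B C) * (br (br A B) C * br (br A C) B⁻¹)⁻¹ ∈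
      (⊤ : Subgroup G).lowerCentralSeries (a + b + c) := by
  obtain ⟨a', rfl⟩ : ∃ a', a = a' + 1 := ⟨a - 1, by omega⟩
  obtain ⟨b', rfl⟩ : ∃ b', b = b' + 1 := ⟨b - 1, by omega⟩
  obtain ⟨c', rfl⟩ : ∃ c', c = c' + 1 := ⟨c - 1, by omega⟩
  simp only [Nat.add_sub_cancel] at hA hB hC
  set n := a' + 1 + (b' + 1) + (c' + 1) with hn
  rw [← QuotientGroup.eq_one_iff]
  set Q := G ⧸ (⊤ : Subgroup G).lowerCentralSeries n
  have mk_br : ∀ u v : G, ((br u v : G) : Q) = br (↑u) (↑v) := by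
    intro u v; simp [br]
  have mk_comm : ∀ u v : G, ((⁅u, v⁆ : G) : Q) = ⁅(↑u : Q), ↑v⁆ := by
    intro u v; simp [commutatorElement_def]
  -- memberships
  have hAB : ⁅A, B⁻¹⁆ ∈ (⊤ : Subgroup G).lowerCentralSeries (a' + b' + 1) := by
    have := mem_lcs_comm hA (Subgroup.inv_mem _ hB)
    simpa using this
  have hBC : ⁅B, C⁻¹⁆ ∈ (⊤ : Subgroup G).lowerCentralSeries (b' + c' + 1) := by
    have := mem_lcs_comm hB (Subgroup.inv_mem _ hC)
    simpa using this
  have hCA : ⁅C, A⁻¹⁆ ∈ (⊤ : Subgroup G).lowerCentralSeries (c' + a' + 1) := by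
    have := mem_lcs_comm hC (Subgroup.inv_mem _ hA)
    simpa using this
  have hc1 : (↑(⁅⁅A, B⁻¹⁆, C⁆ : G) : Q) ∈ Subgroup.center Q :=
    mk_mem_center n (mem_lcs_comm hAB hC) (by omega)
  have hc2 : (↑(⁅⁅B, C⁻¹⁆, A⁆ : G) : Q) ∈ Subgroup.center Q :=
    mk_mem_center n (mem_lcs_comm hBC hA) (by omega)
  have hc3 : (↑(⁅⁅C, A⁻¹⁆, B⁆ : G) : Q) ∈ Subgroup.center Q :=
    mk_mem_center n (mem_lcs_comm hCA hB) (by omega)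
  have hAC_B : ⁅A⁻¹ * C, B⁆ ∈ (⊤ : Subgroup G).lowerCentralSeries (b' + 1) := by
    have := mem_lcs_comm (mem_lcs_zero (A⁻¹ * C)) hB
    simpa using this
  have hcom : Commute (↑(⁅C, A⁻¹⁆ : G) : Q) (↑(⁅A⁻¹ * C, B⁆ : G) : Q) :=
    mk_commute n hCA hAC_B (by omega)
  rw [mk_comm, mk_comm] at hc1 hc2 hc3
  rw [mk_comm, mk_comm] at hcom
  simp only [QuotientGroup.mk_inv] at hc1 hc2 hc3 hcom
  simp only [QuotientGroup.mk_mul, QuotientGroup.mk_inv] at hcom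
  have keyQ := key_identity (↑A : Q) (↑B) (↑C) hc1 hc2 hc3 hcom
  push_cast [QuotientGroup.mk_mul, QuotientGroup.mk_inv, mk_br]
  rw [keyQ]
  group
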